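/- For the controlled SEIR model: if differentiable functions S, E, I, R : ℝ → ℝ satisfy S'(t) = −β(t) S(t) I(t), E'(t) = β(t) S(t) I(t) − η E(t), I'(t) = η E(t) − γ(t) I(t), R'(t) = γ(t) I(t) for all t ≥ t0, where η > 0, β(t) ∈ [β_min, β_max] with 0 < β_min ≤ β_max, and γ(t) ∈ [γ_min, γ_max] with 0 < γ_min ≤ γ_max, and if (S(t0), E(t0), I(t0), R(t0)) ∈ Π, then (S(t), E(t), I(t), R(t)) ∈ Π for all t ≥ t0; that is, the simplex Π is positively invariant for the SEIR model. -/

import Mathlib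

open Set Filter Real

lemma aux_mul_ge {a A x c : ℝ} (ha : 0 ≤ a) (haA : a ≤ A) (hx : -c ≤ x) (hc : 0 ≤ c) :
    -(A * c) ≤ a * x := by
  nlinarith [mul_nonneg ha (by linarith : (0:ℝ) ≤ x + c),
    mul_nonneg (by linarith : (0:ℝ) ≤ A - a) hc]

lemma aux_neBot {t0 t1 : ℝ} (h : t0 < t1) : (nhdsWithin t1 (Set.Ico t0 t1)).NeBot := by
  rw [← mem_closure_iff_nhdsWithin_neBot, closure_Ico h.ne]
  exact ⟨h.le, le_refl t1⟩

lemma aux_nonneg_closure {f : ℝ → ℝ} {t0 t1 : ℝ} (h : t0 < t1) (hc : ContinuousAt f t1)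
    (hpos : ∀ t, t0 ≤ t → t < t1 → 0 < f t) : 0 ≤ f t1 := by
  have := aux_neBot h
  refine ge_of_tendsto (hc.tendsto.mono_left (nhdsWithin_le_nhds (s := Set.Ico t0 t1))) ?_
  filter_upwards [self_mem_nhdsWithin] with t ht'
  exact (hpos t ht'.1 ht'.2).le

lemma aux_deriv_nonpos {f : ℝ → ℝ} {t0 t1 d : ℝ} (h : t0 < t1) (hd : HasDerivAt f d t1)
    (hpos : ∀ t, t0 ≤ t → t < t1 → 0 < f t) (h0 : f t1 = 0) : d ≤ 0 := by
  have := aux_neBot h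
  have hsl : Tendsto (slope f t1) (nhdsWithin t1 (Set.Ico t0 t1)) (nhds d) :=
    (hasDerivAt_iff_tendsto_slope.mp hd).mono_left
      (nhdsWithin_mono _ (fun x hx => ne_of_lt hx.2))
  refine le_of_tendsto hsl ?_
  filter_upwards [self_mem_nhdsWithin] with t ht'
  rw [slope_def_field, h0, sub_zero]
  exact le_of_lt (div_neg_of_pos_of_neg (hpos t ht'.1 ht'.2) (by linarith [ht'.2]))

set_option maxHeartbeats 1000000 in
theorem seir_simplex_positively_invariant
    (η βmin βmax γmin γmax t0 : ℝ) (S E I R β γ : ℝ → ℝ)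
    (hη : 0 < η) (hβmin : 0 < βmin) (hβ : βmin ≤ βmax)
    (hγmin : 0 < γmin) (hγ : γmin ≤ γmax)
    (hSd : Differentiable ℝ S) (hEd : Differentiable ℝ E)
    (hId : Differentiable ℝ I) (hRd : Differentiable ℝ R)
    (hβmem : ∀ t, t0 ≤ t → β t ∈ Set.Icc βmin βmax)
    (hγmem : ∀ t, t0 ≤ t → γ t ∈ Set.Icc γmin γmax)
    (hS : ∀ t, t0 ≤ t → HasDerivAt S (-(β t * S t * I t)) t)
    (hE : ∀ t, t0 ≤ t → HasDerivAt E (β t * S t * I t - η * E t) t)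
    (hI : ∀ t, t0 ≤ t → HasDerivAt I (η * E t - γ t * I t) t)
    (hR : ∀ t, t0 ≤ t → HasDerivAt R (γ t * I t) t)
    (h0 : S t0 ∈ Set.Icc (0 : ℝ) 1 ∧ E t0 ∈ Set.Icc (0 : ℝ) 1 ∧
          I t0 ∈ Set.Icc (0 : ℝ) 1 ∧ R t0 ∈ Set.Icc (0 : ℝ) 1 ∧
          S t0 + E t0 + I t0 + R t0 = 1) :
    ∀ t, t0 ≤ t →
      S t ∈ Set.Icc (0 : ℝ) 1 ∧ E t ∈ Set.Icc (0 : ℝ) 1 ∧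
      I t ∈ Set.Icc (0 : ℝ) 1 ∧ R t ∈ Set.Icc (0 : ℝ) 1 ∧
      S t + E t + I t + R t = 1 := by
  obtain ⟨hS0, hE0, hI0, hR0, hsum0⟩ := h0
  have hβmax : 0 < βmax := lt_of_lt_of_le hβmin hβ
  have hγmax : 0 < γmax := lt_of_lt_of_le hγmin hγ
  have hSc := hSd.continuous
  have hEc := hEd.continuous
  have hIc := hId.continuous
  have hRc := hRd.continuous
  -- conservation of the total
  have hsum : ∀ t, t0 ≤ t → S t + E t + I t + R t = 1 := by
    intro t ht
    have hcont : ContinuousOn (fun s => S s + E s + I s + R s) (Set.Icc t0 t) :=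
      (((hSc.add hEc).add hIc).add hRc).continuousOn
    have hderiv : ∀ x ∈ Set.Ico t0 t,
        HasDerivWithinAt (fun s => S s + E s + I s + R s) 0 (Set.Ici x) x := by
      intro x hx
      have h := (((hS x hx.1).add (hE x hx.1)).add (hI x hx.1)).add (hR x hx.1)
      have heq : -(β x * S x * I x) + (β x * S x * I x - η * E x) + (η * E x - γ x * I x)
          + γ x * I x = 0 := by ring
      rw [heq] at h
      exact h.hasDerivWithinAt
    have := constant_of_has_deriv_right_zero hcont hderiv t ⟨ht, le_refl t⟩
    rw [this]
    exact hsum0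
  -- the min of the four components
  have hGS : ∀ t, min (min (S t) (E t)) (min (I t) (R t)) ≤ S t :=
    fun t => (min_le_left _ _).trans (min_le_left _ _)
  have hGE : ∀ t, min (min (S t) (E t)) (min (I t) (R t)) ≤ E t :=
    fun t => (min_le_left _ _).trans (min_le_right _ _)
  have hGI : ∀ t, min (min (S t) (E t)) (min (I t) (R t)) ≤ I t :=
    fun t => (min_le_right _ _).trans (min_le_left _ _)
  have hGR : ∀ t, min (min (S t) (E t)) (min (I t) (R t)) ≤ R t :=
    fun t => (min_le_right _ _).trans (min_le_right _ _)
  have hGcont : Continuous (fun t => min (min (S t) (E t)) (min (I t) (R t))) :=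
    (hSc.min hEc).min (hIc.min hRc)
  -- nonnegativity of the min of components on [t0, T]
  have hnn : ∀ T, t0 ≤ T → ∀ t ∈ Set.Icc t0 T,
      0 ≤ min (min (S t) (E t)) (min (I t) (R t)) := by
    intro T hT
    obtain ⟨MS, hMS⟩ := isCompact_Icc.exists_bound_of_continuousOn
      (hSc.continuousOn (s := Set.Icc t0 T))
    obtain ⟨MI, hMI⟩ := isCompact_Icc.exists_bound_of_continuousOn
      (hIc.continuousOn (s := Set.Icc t0 T))
    obtain ⟨M, hMdef⟩ : ∃ M : ℝ, M = max 0 (max MS MI) := ⟨_, rfl⟩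
    have hM0 : 0 ≤ M := hMdef ▸ le_max_left _ _
    have hMS' : MS ≤ M := hMdef ▸ (le_max_left MS MI).trans (le_max_right _ _)
    have hMI' : MI ≤ M := hMdef ▸ (le_max_right MS MI).trans (le_max_right _ _)
    obtain ⟨K, hKdef⟩ : ∃ K : ℝ, K = βmax * M + η + γmax := ⟨_, rfl⟩
    have hK : 0 < K := by
      have : 0 ≤ βmax * M := mul_nonneg hβmax.le hM0
      rw [hKdef]; linarith
    have hwpos : ∀ t : ℝ, 0 < Real.exp (2 * K * (t - t0)) := fun t => Real.exp_pos _
    have hwcont : Continuous (fun t : ℝ => Real.exp (2 * K * (t - t0))) :=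
      Real.continuous_exp.comp (by continuity)
    have hwderiv : ∀ t : ℝ, HasDerivAt (fun s : ℝ => Real.exp (2 * K * (s - t0)))
        (2 * K * Real.exp (2 * K * (t - t0))) t := by
      intro t
      have h1 : HasDerivAt (fun s : ℝ => 2 * K * (s - t0)) (2 * K) t := by
        simpa using ((hasDerivAt_id t).sub_const t0).const_mul (2 * K)
      simpa [mul_comm] using h1.exp
    -- barrier argument
    have main : ∀ ε > (0:ℝ), ∀ t ∈ Set.Icc t0 T,
        0 < min (min (S t) (E t)) (min (I t) (R t)) + ε * Real.exp (2 * K * (t - t0)) := by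
      intro ε hε
      by_contra hcon
      push_neg at hcon
      obtain ⟨tb, htb, htble⟩ := hcon
      have hBclosed : IsClosed (Set.Icc t0 T ∩
          {t | min (min (S t) (E t)) (min (I t) (R t)) + ε * Real.exp (2 * K * (t - t0)) ≤ 0}) :=
        isClosed_Icc.inter (isClosed_le (hGcont.add (continuous_const.mul hwcont)) continuous_const)
      have hBne : (Set.Icc t0 T ∩
          {t | min (min (S t) (E t)) (min (I t) (R t)) + ε * Real.exp (2 * K * (t - t0)) ≤ 0}).Nonempty :=
        ⟨tb, htb, htble⟩
      have hBbdd : BddBelow (Set.Icc t0 T ∩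
          {t | min (min (S t) (E t)) (min (I t) (R t)) + ε * Real.exp (2 * K * (t - t0)) ≤ 0}) :=
        ⟨t0, fun x hx => hx.1.1⟩
      obtain ⟨t1, ht1def⟩ : ∃ t1 : ℝ, t1 = sInf (Set.Icc t0 T ∩
          {t | min (min (S t) (E t)) (min (I t) (R t)) + ε * Real.exp (2 * K * (t - t0)) ≤ 0}) :=
        ⟨_, rfl⟩
      have ht1B := ht1def ▸ hBclosed.csInf_mem hBne hBbdd
      have ht1mem : t1 ∈ Set.Icc t0 T := ht1B.1
      have hGt1 : min (min (S t1) (E t1)) (min (I t1) (R t1))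
          + ε * Real.exp (2 * K * (t1 - t0)) ≤ 0 := ht1B.2
      have ht0lt : t0 < t1 := by
        rcases lt_or_eq_of_le ht1mem.1 with h | h
        · exact h
        · exfalso
          rw [← h] at hGt1
          have hw0 : Real.exp (2 * K * (t0 - t0)) = 1 := by norm_num
          have hGt0 : 0 ≤ min (min (S t0) (E t0)) (min (I t0) (R t0)) :=
            le_min (le_min hS0.1 hE0.1) (le_min hI0.1 hR0.1)
          rw [hw0] at hGt1
          linarith
      have hpre : ∀ t, t0 ≤ t → t < t1 →
          0 < min (min (S t) (E t)) (min (I t) (R t)) + ε * Real.exp (2 * K * (t - t0)) := by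
        intro t h1 h2
        by_contra hcc
        push_neg at hcc
        have hmem : t ∈ (Set.Icc t0 T ∩
            {t | min (min (S t) (E t)) (min (I t) (R t)) + ε * Real.exp (2 * K * (t - t0)) ≤ 0}) :=
          ⟨⟨h1, le_trans h2.le ht1mem.2⟩, hcc⟩
        have := csInf_le hBbdd hmem
        rw [← ht1def] at this
        exact absurd this (not_le.mpr h2)
      obtain ⟨δ, hδdef⟩ : ∃ d : ℝ, d = ε * Real.exp (2 * K * (t1 - t0)) := ⟨_, rfl⟩
      have hδ : 0 < δ := hδdef ▸ mul_pos hε (hwpos t1)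
      rw [← hδdef] at hGt1
      -- each component is ≥ -δ at t1
      have hclosure : ∀ y : ℝ → ℝ, Continuous y →
          (∀ t, min (min (S t) (E t)) (min (I t) (R t)) ≤ y t) → 0 ≤ y t1 + δ := by
        intro y hyc hGy
        have h := aux_nonneg_closure ht0lt
          (f := fun t => y t + ε * Real.exp (2 * K * (t - t0)))
          (hyc.add (continuous_const.mul hwcont)).continuousAt
          (fun t h1 h2 => lt_of_lt_of_le (hpre t h1 h2)
            (add_le_add_left (hGy t) _))
        simpa [← hδdef] using h
      have hSge : 0 ≤ S t1 + δ := hclosure S hSc hGS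
      have hEge : 0 ≤ E t1 + δ := hclosure E hEc hGE
      have hIge : 0 ≤ I t1 + δ := hclosure I hIc hGI
      have hRge : 0 ≤ R t1 + δ := hclosure R hRc hGR
      -- key derivative fact for the component that hits the barrier
      have keylem : ∀ (y : ℝ → ℝ) (dy : ℝ), HasDerivAt y dy t1 →
          (∀ t, min (min (S t) (E t)) (min (I t) (R t)) ≤ y t) →
          y t1 = -δ → dy + 2 * K * δ ≤ 0 := by
        intro y dy hyd hGy hyeq
        have hwd : HasDerivAt (fun t => y t + ε * Real.exp (2 * K * (t - t0)))
            (dy + 2 * K * δ) t1 := by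
          have h := hyd.add ((hwderiv t1).const_mul ε)
          have heq : dy + ε * (2 * K * Real.exp (2 * K * (t1 - t0))) = dy + 2 * K * δ := by
            rw [hδdef]; ring
          rwa [heq] at h
        refine aux_deriv_nonpos ht0lt hwd
          (fun t h1 h2 => lt_of_lt_of_le (hpre t h1 h2)
            (add_le_add_left (hGy t) _)) ?_
        rw [hyeq, ← hδdef]
        ring
      -- bounds at t1
      have ht1le : t0 ≤ t1 := ht1mem.1
      have hβ1 := hβmem t1 ht1le
      have hγ1 := hγmem t1 ht1le
      have hβ1pos : 0 ≤ β t1 := le_trans hβmin.le hβ1.1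
      have hγ1pos : 0 ≤ γ t1 := le_trans hγmin.le hγ1.1
      have hIbd : |I t1| ≤ M := by
        have h := hMI t1 ht1mem
        rw [Real.norm_eq_abs] at h
        exact h.trans hMI'
      have hSbd : |S t1| ≤ M := by
        have h := hMS t1 ht1mem
        rw [Real.norm_eq_abs] at h
        exact h.trans hMS'
      obtain ⟨hI1, hI2⟩ := abs_le.mp hIbd
      obtain ⟨hS1, hS2⟩ := abs_le.mp hSbd
      have hKδ : 0 < K * δ := mul_pos hK hδ
      have hmin : min (min (S t1) (E t1)) (min (I t1) (R t1)) ≤ -δ := by linarith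
      rcases min_le_iff.mp hmin with h4 | h4 <;> rcases min_le_iff.mp h4 with h5 | h5
      · -- S hits: S t1 = -δ
        have hyeq : S t1 = -δ := le_antisymm h5 (by linarith)
        have hd := keylem S _ (hS t1 ht1le) hGS hyeq
        rw [hyeq] at hd
        have key : -(βmax * (δ * M)) ≤ β t1 * (δ * I t1) :=
          aux_mul_ge hβ1pos hβ1.2 (by nlinarith) (mul_nonneg hδ.le hM0)
        rw [hKdef] at hd
        nlinarith [mul_nonneg hη.le hδ.le, mul_nonneg hγmax.le hδ.le]
      · -- E hits
        have hyeq : E t1 = -δ := le_antisymm h5 (by linarith)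
        have hd := keylem E _ (hE t1 ht1le) hGE hyeq
        rw [hyeq] at hd
        have hSI : -(δ * M) ≤ S t1 * I t1 := by
          rcases le_or_gt 0 (S t1) with hs | hs
          · nlinarith [mul_nonneg hs (by linarith : (0:ℝ) ≤ I t1 + δ),
              mul_nonneg (by linarith : (0:ℝ) ≤ M - S t1) hδ.le]
          · nlinarith [mul_nonneg (by linarith : (0:ℝ) ≤ -S t1) (by linarith : (0:ℝ) ≤ M - I t1),
              mul_nonneg (by linarith : (0:ℝ) ≤ S t1 + δ) hM0]
        have key : -(βmax * (δ * M)) ≤ β t1 * (S t1 * I t1) :=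
          aux_mul_ge hβ1pos hβ1.2 (by linarith) (mul_nonneg hδ.le hM0)
        rw [hKdef] at hd
        nlinarith [mul_nonneg hγmax.le hδ.le]
      · -- I hits
        have hyeq : I t1 = -δ := le_antisymm h5 (by linarith)
        have hd := keylem I _ (hI t1 ht1le) hGI hyeq
        rw [hyeq] at hd
        have h1 : η * (-δ) ≤ η * E t1 := mul_le_mul_of_nonneg_left (by linarith) hη.le
        have h2 : 0 ≤ γ t1 * δ := mul_nonneg hγ1pos hδ.le
        rw [hKdef] at hd
        nlinarith [mul_nonneg (mul_nonneg hβmax.le hM0) hδ.le, mul_nonneg hγmax.le hδ.le]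
      · -- R hits
        have hyeq : R t1 = -δ := le_antisymm h5 (by linarith)
        have hd := keylem R _ (hR t1 ht1le) hGR hyeq
        have key : -(γmax * δ) ≤ γ t1 * I t1 :=
          aux_mul_ge hγ1pos hγ1.2 (by linarith) hδ.le
        rw [hKdef] at hd
        nlinarith [mul_nonneg (mul_nonneg hβmax.le hM0) hδ.le, mul_nonneg hη.le hδ.le]
    -- let ε → 0
    intro t ht
    by_contra hcc
    push_neg at hcc
    obtain ⟨c, hcdef⟩ : ∃ c : ℝ, c = Real.exp (2 * K * (t - t0)) := ⟨_, rfl⟩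
    have hcpos : 0 < c := hcdef ▸ hwpos t
    obtain ⟨G0, hG0def⟩ : ∃ g : ℝ, g = min (min (S t) (E t)) (min (I t) (R t)) := ⟨_, rfl⟩
    have hG0neg : G0 < 0 := hG0def ▸ hcc
    have h := main (-G0 / (2 * c)) (div_pos (by linarith) (by linarith)) t ht
    rw [← hG0def, ← hcdef] at h
    have hq : -G0 / (2 * c) * c = -G0 / 2 := by field_simp
    rw [hq] at h
    linarith
  -- conclude
  intro t ht
  have hs := hsum t ht
  have hG := hnn t ht t ⟨ht, le_refl t⟩
  have ha : 0 ≤ S t := le_trans hG (hGS t)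
  have hb : 0 ≤ E t := le_trans hG (hGE t)
  have hc : 0 ≤ I t := le_trans hG (hGI t)
  have hd : 0 ≤ R t := le_trans hG (hGR t)
  exact ⟨⟨ha, by linarith⟩, ⟨hb, by linarith⟩, ⟨hc, by linarith⟩, ⟨hd, by linarith⟩, hs⟩
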